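/- The maximal extension of the trace distance D(ρ,σ) = ½‖ρ−σ‖₁ from density matrices to subnormalized states (via trace-non-increasing CP maps) equals the generalized trace distance: D̄(ρ̃,σ̃) = ½‖ρ̃ − σ̃‖₁ + ½|Tr[ρ̃ − σ̃]| for all positive semidefinite ρ̃, σ̃ with trace ≤ 1. Equivalently: ½‖(ρ̃⊕(1−Tr ρ̃)) − (σ̃⊕(1−Tr σ̃))‖₁ = ½‖ρ̃−σ̃‖₁ + ½|Tr[ρ̃−σ̃]|. -/

import Mathlib

open scoped ENNReal Kronecker ComplexOrder Matrix
open Classical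

/-- A density matrix: positive semidefinite with unit trace. -/
def IsDensity {n : Type} [Fintype n] (ρ : Matrix n n ℂ) : Prop :=
  ρ.PosSemidef ∧ ρ.trace = 1

/-- The extension `id_m ⊗ Φ` of a map `Φ` on matrices, acting blockwise. -/
def cpExt {a b : Type} (Φ : Matrix a a ℂ → Matrix b b ℂ) (m : Type)
    (M : Matrix (m × a) (m × a) ℂ) : Matrix (m × b) (m × b) ℂ :=
  Matrix.of fun p q => Φ (Matrix.of fun k l => M (p.1, k) (q.1, l)) p.2 q.2

/-- A map on matrices is completely positive if every extension `id_m ⊗ Φ`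
preserves positive semidefiniteness. -/
def IsCP {a b : Type} [Fintype a] [Fintype b] (Φ : Matrix a a ℂ → Matrix b b ℂ) : Prop :=
  ∀ (m : Type) [Fintype m] (M : Matrix (m × a) (m × a) ℂ),
    M.PosSemidef → (cpExt Φ m M).PosSemidef

/-- A quantum channel: a linear, completely positive, trace-preserving map. -/
def IsCPTP {a b : Type} [Fintype a] [Fintype b] (Φ : Matrix a a ℂ → Matrix b b ℂ) : Prop :=
  (∀ (c : ℂ) (A B : Matrix a a ℂ), Φ (c • A + B) = c • Φ A + Φ B) ∧
    IsCP Φ ∧ ∀ A : Matrix a a ℂ, (Φ A).trace = A.trace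

/-- The projector onto the support of a Hermitian matrix. -/
noncomputable def suppProj {n : Type} [Fintype n] [DecidableEq n]
    (ρ : Matrix n n ℂ) : Matrix n n ℂ :=
  if h : ρ.IsHermitian then
    (h.eigenvectorUnitary : Matrix n n ℂ) *
      Matrix.diagonal (fun i => if h.eigenvalues i = 0 then (0 : ℂ) else 1) *
      (h.eigenvectorUnitary : Matrix n n ℂ)ᴴ
  else 0

/-- The min relative entropy `D_min(ρ‖σ) = -log₂ Tr[Π_ρ σ]` (with value `+∞` if
`Tr[Π_ρ σ] = 0`, i.e. if `ρ ⊥ σ`). -/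
noncomputable def Dmin {n : Type} [Fintype n] [DecidableEq n]
    (ρ σ : Matrix n n ℂ) : ℝ≥0∞ :=
  if ((suppProj ρ * σ).trace.re) = 0 then ∞
  else ENNReal.ofReal (- Real.logb 2 ((suppProj ρ * σ).trace.re))

/-- The max relative entropy `D_max(ρ‖σ) = log₂ min {t : tσ ≥ ρ}` (with value `+∞`
if no such `t` exists, i.e. if `supp ρ ⊄ supp σ`). -/
noncomputable def Dmax {n : Type} [Fintype n]
    (ρ σ : Matrix n n ℂ) : ℝ≥0∞ :=
  if ∃ t : ℝ, ((t : ℂ) • σ - ρ).PosSemidef then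
    ENNReal.ofReal (Real.logb 2 (sInf {t : ℝ | ((t : ℂ) • σ - ρ).PosSemidef}))
  else ∞

/-- A subnormalized state: positive semidefinite with trace at most one. -/
def IsSubnormalized {n : Type} [Fintype n] (ρ : Matrix n n ℂ) : Prop :=
  ρ.PosSemidef ∧ ρ.trace.re ≤ 1

/-- A trace-non-increasing completely positive (linear) map. -/
def IsTNICP {a b : Type} [Fintype a] [Fintype b] (Φ : Matrix a a ℂ → Matrix b b ℂ) : Prop :=
  (∀ (c : ℂ) (A B : Matrix a a ℂ), Φ (c • A + B) = c • Φ A + Φ B) ∧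
    IsCP Φ ∧ ∀ A : Matrix a a ℂ, A.PosSemidef → (Φ A).trace.re ≤ A.trace.re

/-- Append a `1 × 1` block with entry `c` to a matrix (direct sum `ρ ⊕ c`). -/
def appendBlock {n : Type} (ρ : Matrix n n ℂ) (c : ℂ) : Matrix (n ⊕ Unit) (n ⊕ Unit) ℂ :=
  Matrix.fromBlocks ρ 0 0 (Matrix.of fun _ _ => c)

/-- The trace norm `‖A‖₁ = Tr √(Aᴴ A)` (sum of singular values). -/
noncomputable def traceNorm {n : Type} [Fintype n] [DecidableEq n] (A : Matrix n n ℂ) : ℝ :=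
  ((Matrix.posSemidef_conjTranspose_mul_self A).1.eigenvectorUnitary.1 *
    Matrix.diagonal (((↑) : ℝ → ℂ) ∘ (√·) ∘ (Matrix.posSemidef_conjTranspose_mul_self A).1.eigenvalues) *
    (star (Matrix.posSemidef_conjTranspose_mul_self A).1.eigenvectorUnitary : Matrix n n ℂ)).trace.re

open scoped MatrixOrder in
private lemma traceNorm_eq_sqrt {n : Type} [Fintype n] [DecidableEq n] (A : Matrix n n ℂ) :
    traceNorm A = (CFC.sqrt (Aᴴ * A)).trace.re := by
  unfold traceNorm
  rw [CFC.sqrt_eq_cfc, cfc_nnreal_eq_real _ _ (Matrix.posSemidef_conjTranspose_mul_self A).nonneg, (Matrix.posSemidef_conjTranspose_mul_self A).1.cfc_eq]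
  simp only [Matrix.IsHermitian.cfc, Unitary.conjStarAlgAut_apply, Real.coe_sqrt, Real.coe_toNNReal']
  congr 5
  funext i
  simp [max_eq_left ((Matrix.posSemidef_conjTranspose_mul_self A).eigenvalues_nonneg i)]

/-- **Generalized trace distance.** The maximal extension of the trace distance to
subnormalized states, `D̄(ρ̃,σ̃) = ½‖(ρ̃ ⊕ (1-Tr ρ̃)) - (σ̃ ⊕ (1-Tr σ̃))‖₁`, equals the
generalized trace distance `½‖ρ̃ - σ̃‖₁ + ½|Tr[ρ̃ - σ̃]|`. -/

private lemma psd_fromBlocks {n m : Type} [Fintype n] [Fintype m]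
    {A : Matrix n n ℂ} {D : Matrix m m ℂ} (hA : A.PosSemidef) (hD : D.PosSemidef) :
    (Matrix.fromBlocks A 0 0 D).PosSemidef := by
  rw [Matrix.posSemidef_iff_dotProduct_mulVec]
  constructor
  · unfold Matrix.IsHermitian
    rw [Matrix.fromBlocks_conjTranspose]
    simp [hA.1.eq, hD.1.eq]
  · intro x
    rw [Matrix.fromBlocks_mulVec]
    have : star x ⬝ᵥ Sum.elim (A *ᵥ (x ∘ Sum.inl) + 0 *ᵥ (x ∘ Sum.inr))
        (0 *ᵥ (x ∘ Sum.inl) + D *ᵥ (x ∘ Sum.inr)) =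
        star (x ∘ Sum.inl) ⬝ᵥ (A *ᵥ (x ∘ Sum.inl)) +
        star (x ∘ Sum.inr) ⬝ᵥ (D *ᵥ (x ∘ Sum.inr)) := by
      simp [dotProduct, Fintype.sum_sum_type]
    rw [this]
    exact add_nonneg (hA.dotProduct_mulVec_nonneg _) (hD.dotProduct_mulVec_nonneg _)

private lemma trace_fromBlocks' {n m : Type} [Fintype n] [Fintype m]
    (A : Matrix n n ℂ) (D : Matrix m m ℂ) :
    (Matrix.fromBlocks A 0 0 D).trace = A.trace + D.trace := by
  simp [Matrix.trace, Fintype.sum_sum_type]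

open scoped MatrixOrder in
private lemma traceNorm_fromBlocks {n m : Type} [Fintype n] [Fintype m]
    [DecidableEq n] [DecidableEq m] (A : Matrix n n ℂ) (D : Matrix m m ℂ) :
    traceNorm (Matrix.fromBlocks A 0 0 D) = traceNorm A + traceNorm D := by
  set SA := CFC.sqrt (Aᴴ * A) with hSA
  set SD := CFC.sqrt (Dᴴ * D) with hSD
  have hpsdA := Matrix.nonneg_iff_posSemidef.mp (CFC.sqrt_nonneg (Aᴴ * A))
  have hpsdD := Matrix.nonneg_iff_posSemidef.mp (CFC.sqrt_nonneg (Dᴴ * D))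
  have hkey : Matrix.fromBlocks SA 0 0 SD =
      CFC.sqrt ((Matrix.fromBlocks A 0 0 D)ᴴ * Matrix.fromBlocks A 0 0 D) := by
    refine (CFC.sqrt_unique ?_ (psd_fromBlocks hpsdA hpsdD).nonneg).symm
    rw [Matrix.fromBlocks_multiply, Matrix.fromBlocks_conjTranspose,
      Matrix.fromBlocks_multiply]
    simp [CFC.sqrt_mul_sqrt_self _ (Matrix.posSemidef_conjTranspose_mul_self A).nonneg,
      CFC.sqrt_mul_sqrt_self _ (Matrix.posSemidef_conjTranspose_mul_self D).nonneg, SA, SD]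
  rw [traceNorm_eq_sqrt, traceNorm_eq_sqrt, traceNorm_eq_sqrt]
  rw [← hkey, trace_fromBlocks', Complex.add_re]

open scoped MatrixOrder in
private lemma traceNorm_unit (c : ℂ) :
    traceNorm (Matrix.of fun (_ _ : Unit) => c) = ‖c‖ := by
  set B : Matrix Unit Unit ℂ := Matrix.of fun _ _ => c
  have hkey : (Matrix.of fun (_ _ : Unit) => (‖c‖ : ℂ)) =
      CFC.sqrt (Bᴴ * B) := by
    refine (CFC.sqrt_unique (b := Matrix.of fun (_ _ : Unit) => (‖c‖ : ℂ)) ?_ ?_).symm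
    rotate_left
    · rw [Matrix.nonneg_iff_posSemidef, Matrix.posSemidef_iff_dotProduct_mulVec]
      constructor
      · ext i j
        simp [Matrix.conjTranspose_apply]
      · intro x
        have : star x ⬝ᵥ ((Matrix.of fun (_ _ : Unit) => (‖c‖ : ℂ)) *ᵥ x) =
            (‖c‖ : ℂ) * (star (x ()) * x ()) := by
          simp [dotProduct, Matrix.mulVec]; ring
        rw [this]
        apply mul_nonneg
        · exact_mod_cast Complex.zero_le_real.2 (norm_nonneg c)
        · exact star_mul_self_nonneg _
    · ext i j
      simp only [Matrix.mul_apply, Finset.univ_unique, Finset.sum_singleton,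
        Matrix.conjTranspose_apply, Matrix.of_apply, B]
      rw [Complex.star_def, mul_comm ((starRingEnd ℂ) c), Complex.mul_conj, ← Complex.ofReal_mul,
        Complex.normSq_eq_norm_sq, sq]
  rw [traceNorm_eq_sqrt]
  rw [← hkey]
  simp [Matrix.trace]

private lemma trace_im_zero {n : Type} [Fintype n] {A : Matrix n n ℂ}
    (hA : A.IsHermitian) : A.trace.im = 0 := by
  simp only [Matrix.trace, Matrix.diag, Complex.im_sum]
  apply Finset.sum_eq_zero
  intro i _
  have h := hA.apply i i
  rw [Complex.star_def] at h
  have := congrArg Complex.im h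
  simp at this
  linarith

theorem stmt14 (n : Type) [Fintype n] [DecidableEq n] (ρt σt : Matrix n n ℂ)
    (hρ : IsSubnormalized ρt) (hσ : IsSubnormalized σt) :
    (1/2) * traceNorm (appendBlock ρt (1 - ρt.trace) - appendBlock σt (1 - σt.trace)) =
      (1/2) * traceNorm (ρt - σt) + (1/2) * |(ρt - σt).trace.re| := by
  have hdiff : appendBlock ρt (1 - ρt.trace) - appendBlock σt (1 - σt.trace) =
      Matrix.fromBlocks (ρt - σt) 0 0
        (Matrix.of fun _ _ => σt.trace - ρt.trace) := by
    unfold appendBlock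
    ext i j
    cases i <;> cases j <;> simp [Matrix.fromBlocks]
  rw [hdiff, traceNorm_fromBlocks, traceNorm_unit]
  have him : (ρt - σt).trace.im = 0 :=
    trace_im_zero ((hρ.1.1).sub (hσ.1.1))
  have habs : ‖σt.trace - ρt.trace‖ = |(ρt - σt).trace.re| := by
    have h1 : σt.trace - ρt.trace = -((ρt - σt).trace) := by
      rw [Matrix.trace_sub]; ring
    rw [h1, norm_neg]
    have h2 : (ρt - σt).trace = ((ρt - σt).trace.re : ℂ) :=
      Complex.ext (by simp) (by rw [Complex.ofReal_im]; exact him)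
    rw [h2, Complex.norm_real]
    simp [Real.norm_eq_abs]
  rw [habs]
  ring
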